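/- arXiv:2503.01626 — 2 statements merged into one kernel-verified Lean document; each statement's English description precedes it below -/
import Mathlib

section
/- If M is a closed subset of Euclidean n-space contained in the bounding voxel V₀, then M is contained in the limit ⋂_{t ∈ ℕ} C_t(M) of the subdivision approximations, and the difference (⋂_{t ∈ ℕ} C_t(M)) \ M has Lebesgue measure zero (indeed, it is empty). -/
open Set Metric Filter MeasureTheory ENNReal

noncomputable section

variable {n : ℕ}

/-- The bounding voxel `V₀ = {x | ∀ i, a i ≤ x i ∧ x i < b i}`. -/
def boundingVoxel (a b : EuclideanSpace ℝ (Fin n)) : Set (EuclideanSpace ℝ (Fin n)) :=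
  {x | ∀ i, a i ≤ x i ∧ x i < b i}

/-- The level-`t` dyadic sub-voxel `D_t(k)`. -/
def subVoxel (a b : EuclideanSpace ℝ (Fin n)) (t : ℕ) (k : Fin n → ℕ) :
    Set (EuclideanSpace ℝ (Fin n)) :=
  {x | ∀ i, a i + (k i : ℝ) * (b i - a i) / 2 ^ t ≤ x i ∧
            x i < a i + ((k i : ℝ) + 1) * (b i - a i) / 2 ^ t}

/-- The retained indices `Q_t(M)`: admissible `k` whose closed sub-voxel meets `M`. -/
def retained (a b : EuclideanSpace ℝ (Fin n)) (t : ℕ) (M : Set (EuclideanSpace ℝ (Fin n))) :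
    Set (Fin n → ℕ) :=
  {k | (∀ i, k i < 2 ^ t) ∧ (closure (subVoxel a b t k) ∩ M).Nonempty}

/-- The level-`t` approximation `C_t(M)`: union of the closures of retained sub-voxels. -/
def approx (a b : EuclideanSpace ℝ (Fin n)) (t : ℕ) (M : Set (EuclideanSpace ℝ (Fin n))) :
    Set (EuclideanSpace ℝ (Fin n)) :=
  ⋃ k ∈ retained a b t M, closure (subVoxel a b t k)

lemma closure_subVoxel_subset (a b : EuclideanSpace ℝ (Fin n)) (t : ℕ) (k : Fin n → ℕ) :
    closure (subVoxel a b t k) ⊆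
      {x | ∀ i, a i + (k i : ℝ) * (b i - a i) / 2 ^ t ≤ x i ∧
                x i ≤ a i + ((k i : ℝ) + 1) * (b i - a i) / 2 ^ t} := by
  have heq : {x : EuclideanSpace ℝ (Fin n) | ∀ i, a i + (k i : ℝ) * (b i - a i) / 2 ^ t ≤ x i ∧
                x i ≤ a i + ((k i : ℝ) + 1) * (b i - a i) / 2 ^ t}
      = ⋂ i, (fun x : EuclideanSpace ℝ (Fin n) => x i) ⁻¹'
          Icc (a i + (k i : ℝ) * (b i - a i) / 2 ^ t)
              (a i + ((k i : ℝ) + 1) * (b i - a i) / 2 ^ t) := by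
    ext x; simp [mem_Icc]
  apply closure_minimal
  · intro x hx i; exact ⟨(hx i).1, (hx i).2.le⟩
  · rw [heq]
    exact isClosed_iInter fun i => isClosed_Icc.preimage (by fun_prop)

lemma mem_subVoxel_floor (a b : EuclideanSpace ℝ (Fin n)) (hab : ∀ i, a i < b i) (t : ℕ)
    (x : EuclideanSpace ℝ (Fin n)) (hx : ∀ i, a i ≤ x i ∧ x i < b i) :
    ∃ k : Fin n → ℕ, (∀ i, k i < 2 ^ t) ∧ x ∈ subVoxel a b t k := by
  set k : Fin n → ℕ := fun i => (⌊(x i - a i) * 2 ^ t / (b i - a i)⌋).toNat with hk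
  have h2 : (0:ℝ) < 2 ^ t := by positivity
  have key : ∀ i, ((k i : ℝ) ≤ (x i - a i) * 2 ^ t / (b i - a i)) ∧
      ((x i - a i) * 2 ^ t / (b i - a i) < (k i : ℝ) + 1) ∧ k i < 2 ^ t := by
    intro i
    have hba : (0:ℝ) < b i - a i := by linarith [hab i]
    set q := (x i - a i) * 2 ^ t / (b i - a i) with hq
    have hq0 : 0 ≤ q := by
      apply div_nonneg _ hba.le
      have := (hx i).1; nlinarith
    have hfl : (0:ℤ) ≤ ⌊q⌋ := Int.floor_nonneg.2 hq0
    have hkc : (k i : ℝ) = (⌊q⌋ : ℝ) := by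
      have : (k i : ℤ) = ⌊q⌋ := by
        simp only [hk, hq]; exact Int.toNat_of_nonneg hfl
      exact_mod_cast this
    have hq2 : q < 2 ^ t := by
      rw [hq, div_lt_iff₀ hba]
      have := (hx i).2; nlinarith
    refine ⟨by rw [hkc]; exact Int.floor_le q, by rw [hkc]; exact_mod_cast Int.lt_floor_add_one q, ?_⟩
    have : (k i : ℝ) < 2 ^ t := by
      rw [hkc]; calc (⌊q⌋:ℝ) ≤ q := Int.floor_le q
        _ < 2 ^ t := hq2
    exact_mod_cast this
  refine ⟨k, fun i => (key i).2.2, fun i => ?_⟩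
  have hba : (0:ℝ) < b i - a i := by linarith [hab i]
  obtain ⟨h1, h2', _⟩ := key i
  constructor
  · have h3 : (k i : ℝ) * (b i - a i) ≤ (x i - a i) * 2 ^ t := (le_div_iff₀ hba).1 h1
    rw [← sub_nonneg]
    have : x i - (a i + (k i : ℝ) * (b i - a i) / 2 ^ t)
        = ((x i - a i) * 2 ^ t - (k i : ℝ) * (b i - a i)) / 2 ^ t := by field_simp; ring
    rw [this]
    exact div_nonneg (by linarith) h2.le
  · rw [← sub_pos]
    have h3 : (x i - a i) * 2 ^ t < ((k i : ℝ) + 1) * (b i - a i) := (div_lt_iff₀ hba).1 h2'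
    have : a i + ((k i : ℝ) + 1) * (b i - a i) / 2 ^ t - x i
        = (((k i : ℝ) + 1) * (b i - a i) - (x i - a i) * 2 ^ t) / 2 ^ t := by field_simp; ring
    rw [this]
    exact div_pos (by linarith) h2

/-- for closed `M ⊆ V₀`, `M` is contained in the limit, and the difference
has Lebesgue measure zero (indeed, it is empty). -/
theorem closed_subset_iInter_approx
    (n : ℕ) (hn : 1 ≤ n) (a b : EuclideanSpace ℝ (Fin n)) (hab : ∀ i, a i < b i)
    (M : Set (EuclideanSpace ℝ (Fin n))) (hMc : IsClosed M) (hM : M ⊆ boundingVoxel a b) :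
    M ⊆ (⋂ t : ℕ, approx a b t M) ∧
      volume ((⋂ t : ℕ, approx a b t M) \ M) = 0 ∧
      ((⋂ t : ℕ, approx a b t M) \ M) = ∅ := by
  have hsub1 : M ⊆ ⋂ t : ℕ, approx a b t M := by
    intro x hx
    rw [mem_iInter]
    intro t
    obtain ⟨k, hkb, hxk⟩ := mem_subVoxel_floor a b hab t x (hM hx)
    have hxc : x ∈ closure (subVoxel a b t k) := subset_closure hxk
    exact mem_biUnion ⟨hkb, ⟨x, hxc, hx⟩⟩ hxc
  have hsub2 : (⋂ t : ℕ, approx a b t M) ⊆ M := by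
    intro x hx
    rw [← hMc.closure_eq]
    rw [Metric.mem_closure_iff]
    intro ε hε
    set S := Real.sqrt (∑ i, (b i - a i) ^ 2) with hS
    have hS0 : 0 ≤ S := Real.sqrt_nonneg _
    obtain ⟨t, ht⟩ := pow_unbounded_of_one_lt (S / ε) (by norm_num : (1:ℝ) < 2)
    have h2t : (0:ℝ) < 2 ^ t := by positivity
    have hSt : S / 2 ^ t < ε := by
      rw [div_lt_iff₀ h2t]
      have := (div_lt_iff₀ hε).1 ht
      nlinarith
    -- extract retained voxel at level t
    have hxt := mem_iInter.1 hx t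
    simp only [approx, mem_iUnion] at hxt
    obtain ⟨k, hk, hxc⟩ := hxt
    obtain ⟨y, hyc, hyM⟩ := hk.2
    refine ⟨y, hyM, lt_of_le_of_lt ?_ hSt⟩
    -- bound dist x y
    have hxbox := closure_subVoxel_subset a b t k hxc
    have hybox := closure_subVoxel_subset a b t k hyc
    have hcoord : ∀ i, dist (x i) (y i) ^ 2 ≤ ((b i - a i) / 2 ^ t) ^ 2 := by
      intro i
      have h1 := hxbox i
      have h2 := hybox i
      have hdiff : a i + ((k i : ℝ) + 1) * (b i - a i) / 2 ^ t
          - (a i + (k i : ℝ) * (b i - a i) / 2 ^ t) = (b i - a i) / 2 ^ t := by ring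
      have habs : |x i - y i| ≤ (b i - a i) / 2 ^ t := by
        rw [abs_le]
        constructor
        · linarith [h1.1, h2.2]
        · linarith [h1.2, h2.1]
      have hd : dist (x i) (y i) = |x i - y i| := Real.dist_eq _ _
      rw [hd]
      have h0 : (0:ℝ) ≤ |x i - y i| := abs_nonneg _
      nlinarith
    rw [EuclideanSpace.dist_eq]
    have hsum : ∑ i, dist (x i) (y i) ^ 2 ≤ ∑ i, ((b i - a i) / 2 ^ t) ^ 2 :=
      Finset.sum_le_sum fun i _ => hcoord i
    calc Real.sqrt (∑ i, dist (x i) (y i) ^ 2)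
        ≤ Real.sqrt (∑ i, ((b i - a i) / 2 ^ t) ^ 2) := Real.sqrt_le_sqrt hsum
      _ = S / 2 ^ t := by
          have hsum2 : ∑ i, ((b i - a i) / 2 ^ t) ^ 2
              = (∑ i, (b i - a i) ^ 2) / ((2:ℝ) ^ t) ^ 2 := by
            rw [Finset.sum_div]
            exact Finset.sum_congr rfl fun i _ => div_pow _ _ _
          rw [hsum2, Real.sqrt_div (by positivity), Real.sqrt_sq h2t.le, hS]
  refine ⟨hsub1, ?_, ?_⟩ <;> rw [diff_eq_empty.2 hsub2]
  simp
end
end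

section
/- Let M be a subset of Euclidean n-space contained in the bounding voxel V₀, and let d ≥ 0 be a real number. Then the d-dimensional Hausdorff measure of M is bounded by the limit inferior of the d-dimensional volumes of the subdivision approximations: μH^d(M) ≤ liminf_{t → ∞} (card Q_t(M)) · (2^{-t} · ‖b − a‖)^d, where card Q_t(M) is the (finite) number of retained level-t dyadic sub-voxels. -/
open Set Metric Filter MeasureTheory ENNReal Topology

noncomputable section

variable {n : ℕ}

lemma retained_finite (a b : EuclideanSpace ℝ (Fin n)) (t : ℕ)
    (M : Set (EuclideanSpace ℝ (Fin n))) : (retained a b t M).Finite := by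
  apply Set.Finite.subset (Set.Finite.pi (fun i : Fin n => Set.finite_Iio (2 ^ t)))
  intro k hk i _
  exact hk.1 i

lemma diam_subVoxel_le (a b : EuclideanSpace ℝ (Fin n)) (hab : ∀ i, a i < b i)
    (t : ℕ) (k : Fin n → ℕ) :
    EMetric.diam (closure (subVoxel a b t k)) ≤
      ENNReal.ofReal ((2 : ℝ) ^ (-(t : ℤ)) * ‖b - a‖) := by
  have h2 : (0:ℝ) < 2 ^ t := by positivity
  have hc : (0:ℝ) ≤ (2:ℝ) ^ (-(t : ℤ)) := by positivity
  show Metric.ediam _ ≤ _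
  rw [EMetric.diam_closure]
  apply EMetric.diam_le
  intro x hx y hy
  rw [edist_dist]
  apply ENNReal.ofReal_le_ofReal
  rw [EuclideanSpace.dist_eq]
  have hnorm : ‖b - a‖ = Real.sqrt (∑ i, (b i - a i) ^ 2) := by
    rw [EuclideanSpace.norm_eq]
    congr 1
    refine Finset.sum_congr rfl fun i _ => ?_
    rw [Real.norm_eq_abs, sq_abs]
    simp [PiLp.sub_apply]
  have hczpow : (2:ℝ) ^ (-(t : ℤ)) = (2 ^ t : ℝ)⁻¹ := by
    rw [zpow_neg, zpow_natCast]
  calc Real.sqrt (∑ i, dist (x i) (y i) ^ 2)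
      ≤ Real.sqrt (∑ i, ((2:ℝ) ^ (-(t : ℤ)) * (b i - a i)) ^ 2) := by
        apply Real.sqrt_le_sqrt
        apply Finset.sum_le_sum
        intro i _
        have hxi := hx i
        have hyi := hy i
        have hsplit : ((k i : ℝ) + 1) * (b i - a i) / 2 ^ t
            = (k i : ℝ) * (b i - a i) / 2 ^ t + (b i - a i) / 2 ^ t := by ring
        have hd : dist (x i) (y i) ≤ (b i - a i) / 2 ^ t := by
          rw [Real.dist_eq, abs_le]
          constructor <;> [linarith [hxi.1, hyi.2, hsplit]; linarith [hyi.1, hxi.2, hsplit]]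
        have hd0 : (0:ℝ) ≤ dist (x i) (y i) := dist_nonneg
        have heq : (b i - a i) / 2 ^ t = (2:ℝ) ^ (-(t : ℤ)) * (b i - a i) := by
          rw [hczpow]; ring
        rw [heq] at hd
        nlinarith [hd, hd0]
    _ = Real.sqrt (((2:ℝ) ^ (-(t : ℤ))) ^ 2 * ∑ i, (b i - a i) ^ 2) := by
        rw [Finset.mul_sum]
        congr 1
        exact Finset.sum_congr rfl fun i _ => by ring
    _ = (2:ℝ) ^ (-(t : ℤ)) * ‖b - a‖ := by
        rw [Real.sqrt_mul (sq_nonneg _), Real.sqrt_sq hc, hnorm]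

lemma mem_subVoxel_of_mem (a b : EuclideanSpace ℝ (Fin n)) (hab : ∀ i, a i < b i)
    (t : ℕ) (x : EuclideanSpace ℝ (Fin n)) (hx : x ∈ boundingVoxel a b) :
    ∃ k : Fin n → ℕ, (∀ i, k i < 2 ^ t) ∧ x ∈ subVoxel a b t k := by
  have h2 : (0:ℝ) < 2 ^ t := by positivity
  set q : Fin n → ℝ := fun i => (x i - a i) * 2 ^ t / (b i - a i) with hq
  have hc : ∀ i, (0:ℝ) < b i - a i := fun i => sub_pos.mpr (hab i)
  have hq0 : ∀ i, 0 ≤ q i := fun i => by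
    have hxa : (0:ℝ) ≤ x i - a i := sub_nonneg.mpr (hx i).1
    exact div_nonneg (mul_nonneg hxa h2.le) (hc i).le
  set k : Fin n → ℕ := fun i => ⌊q i⌋₊ with hkdef
  have hki : ∀ i, (k i : ℝ) = (⌊q i⌋₊ : ℝ) := fun i => rfl
  refine ⟨k, fun i => ?_, fun i => ?_⟩
  · rw [← Nat.cast_lt (α := ℝ)]
    push_cast
    calc (k i : ℝ) ≤ q i := by rw [hki]; exact Nat.floor_le (hq0 i)
      _ < 2 ^ t := by
          rw [hq, div_lt_iff₀ (hc i)]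
          nlinarith [(hx i).2, h2]
  · have hqmul : q i * (b i - a i) = (x i - a i) * 2 ^ t := div_mul_cancel₀ _ (hc i).ne'
    constructor
    · have hfl : (k i : ℝ) ≤ q i := by rw [hki]; exact Nat.floor_le (hq0 i)
      have h1 : (k i : ℝ) * (b i - a i) ≤ (x i - a i) * 2 ^ t := by
        calc (k i : ℝ) * (b i - a i) ≤ q i * (b i - a i) :=
              mul_le_mul_of_nonneg_right hfl (hc i).le
          _ = (x i - a i) * 2 ^ t := hqmul
      have h3 : (k i : ℝ) * (b i - a i) / 2 ^ t ≤ x i - a i := by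
        rw [div_le_iff₀ h2]; linarith
      linarith
    · have hfl : q i < (k i : ℝ) + 1 := by rw [hki]; exact Nat.lt_floor_add_one _
      have h1 : (x i - a i) * 2 ^ t < ((k i : ℝ) + 1) * (b i - a i) := by
        calc (x i - a i) * 2 ^ t = q i * (b i - a i) := hqmul.symm
          _ < ((k i : ℝ) + 1) * (b i - a i) := mul_lt_mul_of_pos_right hfl (hc i)
      have h3 : x i - a i < ((k i : ℝ) + 1) * (b i - a i) / 2 ^ t := by
        rw [lt_div_iff₀ h2]; linarith
      linarith

/-- the `d`-dimensional Hausdorff measure of `M` is bounded by the liminf of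
the `d`-dimensional volumes `(card Q_t(M)) · (2^{-t}·‖b - a‖)^d` of the approximations. -/
theorem hausdorffMeasure_le_liminf
    (n : ℕ) (hn : 1 ≤ n) (a b : EuclideanSpace ℝ (Fin n)) (hab : ∀ i, a i < b i)
    (M : Set (EuclideanSpace ℝ (Fin n))) (hM : M ⊆ boundingVoxel a b)
    (d : ℝ) (hd : 0 ≤ d) :
    μH[d] M ≤ Filter.liminf (fun t : ℕ =>
      ((retained a b t M).ncard : ℝ≥0∞) *
        (ENNReal.ofReal ((2 : ℝ) ^ (-(t : ℤ)) * ‖b - a‖)) ^ d) Filter.atTop := by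
  classical
  haveI : ∀ t, Fintype ↥(retained a b t M) := fun t => (retained_finite a b t M).fintype
  set r : ℕ → ℝ≥0∞ := fun t => ENNReal.ofReal ((2 : ℝ) ^ (-(t : ℤ)) * ‖b - a‖) with hr_def
  have hr : Tendsto r atTop (𝓝 0) := by
    have h0 : Tendsto (fun t : ℕ => ((2:ℝ)⁻¹) ^ t) atTop (𝓝 0) :=
      tendsto_pow_atTop_nhds_zero_of_lt_one (by norm_num) (by norm_num)
    have h1 := Filter.Tendsto.mul_const ‖b - a‖ h0
    rw [zero_mul] at h1
    have h2 := ENNReal.tendsto_ofReal h1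
    rw [ENNReal.ofReal_zero] at h2
    have heq : r = fun t : ℕ => ENNReal.ofReal (((2:ℝ)⁻¹) ^ t * ‖b - a‖) := by
      funext t
      show ENNReal.ofReal ((2:ℝ) ^ (-(t:ℤ)) * ‖b - a‖)
          = ENNReal.ofReal (((2:ℝ)⁻¹) ^ t * ‖b - a‖)
      rw [zpow_neg, zpow_natCast, inv_pow]
    rw [heq]
    exact h2
  have main := MeasureTheory.Measure.hausdorffMeasure_le_liminf_sum (X := EuclideanSpace ℝ (Fin n))
    (ι := fun t => ↥(retained a b t M)) d M r hr
    (fun t k => closure (subVoxel a b t (k : Fin n → ℕ)))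
    (Filter.Eventually.of_forall fun t k => diam_subVoxel_le a b hab t k)
    (Filter.Eventually.of_forall fun t x hx => by
      obtain ⟨k, hk1, hk2⟩ := mem_subVoxel_of_mem a b hab t x (hM hx)
      have hkr : k ∈ retained a b t M :=
        ⟨hk1, ⟨x, subset_closure hk2, hx⟩⟩
      exact Set.mem_iUnion.mpr ⟨⟨k, hkr⟩, subset_closure hk2⟩)
  refine main.trans (Filter.liminf_le_liminf (Filter.Eventually.of_forall fun t => ?_))
  calc ∑ k : ↥(retained a b t M), EMetric.diam (closure (subVoxel a b t (k : Fin n → ℕ))) ^ d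
      ≤ ∑ _k : ↥(retained a b t M), (r t) ^ d :=
        Finset.sum_le_sum fun k _ => ENNReal.rpow_le_rpow (diam_subVoxel_le a b hab t k) hd
    _ = ((retained a b t M).ncard : ℝ≥0∞) * (r t) ^ d := by
        rw [Finset.sum_const, nsmul_eq_mul]
        congr 2
        rw [Finset.card_univ, Set.ncard_eq_toFinset_card']
        simp [Set.toFinset_card]
end
end
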